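/- Let the hyperbolic ellipse with foci (±f,0), 0 < f < 1, and semimajor axis a (2a > d(F₁,F₂)) be given in the Beltrami–Klein model, and let P = (x,y) be a proper exterior point with two hyperbolic tangent lines to the ellipse meeting at angle α. Then cos²α = ((f²-1)cosh(2a)(x²+y²-1) + f²x² - 1)² / (-2(f²-1)y²(f²+x²) + (f²-x²)² + (f²-1)²y⁴). -/

import Mathlib

open Real

/-- Lorentzian bilinear form of signature (1,2) on coordinate triples. -/
def lor (u v : ℝ × ℝ × ℝ) : ℝ := -(u.1 * v.1) + u.2.1 * v.2.1 + u.2.2 * v.2.2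

/-- The proper points of the hyperbolic ellipse with foci `(±f,0)` and semimajor axis `a`
in the Beltrami–Klein model. -/
def hypEllipse (a f : ℝ) : Set (ℝ × ℝ) :=
  {q | q.1 ^ 2 / Real.tanh a ^ 2 +
        q.2 ^ 2 / (1 + 1 / ((f ^ 2 - 1) * Real.cosh a ^ 2)) = 1 ∧
      q.1 ^ 2 + q.2 ^ 2 < 1}

/-- A line with coordinates `(1,u₁,u₂)` is tangent to a set if it meets it in exactly
one point. -/
def IsTangent (u₁ u₂ : ℝ) (C : Set (ℝ × ℝ)) : Prop :=
  ∃! q : ℝ × ℝ, q ∈ C ∧ 1 + u₁ * q.1 + u₂ * q.2 = 0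

lemma cross_of_perp {d₁ d₂ p₁ p₂ q₁ q₂ : ℝ} (hd : d₁ ≠ 0 ∨ d₂ ≠ 0)
    (hp : p₁ * d₁ + p₂ * d₂ = 0) (hq : q₁ * d₁ + q₂ * d₂ = 0) :
    p₁ * q₂ - p₂ * q₁ = 0 := by
  rcases hd with h | h
  · have h2 : (p₁ * q₂ - p₂ * q₁) * d₁ = 0 := by linear_combination q₂ * hp - p₂ * hq
    rcases mul_eq_zero.mp h2 with h3 | h3
    · exact h3
    · exact absurd h3 h
  · have h2 : (p₁ * q₂ - p₂ * q₁) * d₂ = 0 := by linear_combination p₁ * hq - q₁ * hp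
    rcases mul_eq_zero.mp h2 with h3 | h3
    · exact h3
    · exact absurd h3 h

lemma div_sq_div_aux (N D W : ℝ) (hW : W ≠ 0) (hD : D ≠ 0) :
    (N / W) ^ 2 / (D / W ^ 2) = N ^ 2 / D := by
  field_simp

lemma eq_mul_of_div_sq (P D W : ℝ) (hW : W ≠ 0) (h : P = D / W ^ 2) :
    D = P * W ^ 2 := by
  rw [h]; field_simp

set_option maxHeartbeats 1600000 in
lemma tangent_char (a f u₁ u₂ : ℝ) (ha : 0 < a) (hf : 0 < f) (hf' : f < 1)
    (hell : Real.cosh (2 * a) > (1 + f ^ 2) / (1 - f ^ 2))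
    (ht : IsTangent u₁ u₂ (hypEllipse a f)) :
    Real.tanh a ^ 2 * u₁ ^ 2 + (1 + 1 / ((f ^ 2 - 1) * Real.cosh a ^ 2)) * u₂ ^ 2 = 1
      ∧ 1 < u₁ ^ 2 + u₂ ^ 2 := by
  have hf2 : (0:ℝ) < 1 - f ^ 2 := by nlinarith
  have hcpos : 0 < Real.cosh a ^ 2 := by positivity
  have hkey : 1 < (1 - f ^ 2) * Real.cosh a ^ 2 := by
    have h1 := (div_lt_iff₀ hf2).mp hell
    rw [Real.cosh_two_mul, Real.sinh_sq] at h1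
    nlinarith
  have hc : 1 < Real.cosh a ^ 2 := by nlinarith [hkey, mul_pos hcpos (pow_pos hf 2)]
  set A := Real.tanh a ^ 2 with hAdef
  set B := 1 + 1 / ((f ^ 2 - 1) * Real.cosh a ^ 2) with hBdef
  have hA : A = (Real.cosh a ^ 2 - 1) / Real.cosh a ^ 2 := by
    rw [hAdef, Real.tanh_eq_sinh_div_cosh, div_pow, Real.sinh_sq]
  have hcne : Real.cosh a ^ 2 ≠ 0 := ne_of_gt hcpos
  have hA0 : 0 < A := by rw [hA]; apply div_pos <;> linarith
  have hA1 : A < 1 := by rw [hA, div_lt_one hcpos]; linarith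
  have hk : (f ^ 2 - 1) * Real.cosh a ^ 2 < -1 := by nlinarith
  have hkne : (f ^ 2 - 1) * Real.cosh a ^ 2 ≠ 0 := by linarith
  have hB0 : 0 < B := by
    rw [hBdef]
    have h1 : 0 < ((f ^ 2 - 1) * Real.cosh a ^ 2 + 1) / ((f ^ 2 - 1) * Real.cosh a ^ 2) := by
      apply div_pos_of_neg_of_neg <;> linarith
    have h2 : ((f ^ 2 - 1) * Real.cosh a ^ 2 + 1) / ((f ^ 2 - 1) * Real.cosh a ^ 2)
        = 1 + 1 / ((f ^ 2 - 1) * Real.cosh a ^ 2) := by rw [add_div, div_self hkne]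
    linarith [h1, h2]
  have hB1 : B < 1 := by
    rw [hBdef]
    have h1 : 1 / ((f ^ 2 - 1) * Real.cosh a ^ 2) < 0 := by
      apply div_neg_of_pos_of_neg one_pos; linarith
    linarith
  obtain ⟨q, ⟨hqm, hql⟩, huniq⟩ := ht
  simp only [hypEllipse, Set.mem_setOf_eq] at hqm
  rw [← hAdef, ← hBdef] at hqm
  obtain ⟨hqe, hqd⟩ := hqm
  have hu0 : u₁ ≠ 0 ∨ u₂ ≠ 0 := by
    by_contra h
    push_neg at h
    rw [h.1, h.2] at hql
    norm_num at hql
  have hQ0 : 0 < u₂ ^ 2 / A + u₁ ^ 2 / B := by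
    rcases hu0 with h | h
    · have h1 : 0 < u₁ ^ 2 / B := by
        apply div_pos _ hB0
        exact lt_of_le_of_ne (sq_nonneg u₁) (Ne.symm (pow_ne_zero 2 h))
      have h2 : 0 ≤ u₂ ^ 2 / A := div_nonneg (sq_nonneg u₂) hA0.le
      linarith
    · have h1 : 0 < u₂ ^ 2 / A := by
        apply div_pos _ hA0
        exact lt_of_le_of_ne (sq_nonneg u₂) (Ne.symm (pow_ne_zero 2 h))
      have h2 : 0 ≤ u₁ ^ 2 / B := div_nonneg (sq_nonneg u₁) hB0.le
      linarith
  set Q := u₂ ^ 2 / A + u₁ ^ 2 / B with hQdef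
  set L := 2 * (q.1 * u₂ / A - q.2 * u₁ / B) with hLdef
  set t := -L / Q with htdef
  have htQ0 : L + t * Q = 0 := by
    rw [htdef]; field_simp; ring
  have expand : (q.1 + t * u₂) ^ 2 / A + (q.2 - t * u₁) ^ 2 / B
      = q.1 ^ 2 / A + q.2 ^ 2 / B + t * L + t ^ 2 * Q := by
    rw [hQdef, hLdef]
    field_simp
    ring
  have hqt : (q.1 + t * u₂) ^ 2 / A + (q.2 - t * u₁) ^ 2 / B = 1 := by
    rw [expand, hqe]
    linear_combination t * htQ0
  have hq'd : (q.1 + t * u₂) ^ 2 + (q.2 - t * u₁) ^ 2 < 1 := by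
    set s1 := (q.1 + t * u₂) ^ 2 / A with hs1def
    set s2 := (q.2 - t * u₁) ^ 2 / B with hs2def
    have hs1nn : 0 ≤ s1 := by rw [hs1def]; exact div_nonneg (sq_nonneg _) hA0.le
    have hs2nn : 0 ≤ s2 := by rw [hs2def]; exact div_nonneg (sq_nonneg _) hB0.le
    have e1 : (q.1 + t * u₂) ^ 2 = A * s1 := by rw [hs1def]; field_simp
    have e2 : (q.2 - t * u₁) ^ 2 = B * s2 := by rw [hs2def]; field_simp
    have p1 : A * s1 ≤ s1 := by
      have := mul_le_mul_of_nonneg_right hA1.le hs1nn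
      linarith
    have p2 : B * s2 ≤ s2 := by
      have := mul_le_mul_of_nonneg_right hB1.le hs2nn
      linarith
    rw [e1, e2]
    rcases le_or_gt s1 (1/2) with h | h
    · have hs2pos : 0 < s2 := by linarith [hqt]
      have p2' : B * s2 < s2 := by
        have := mul_lt_mul_of_pos_right hB1 hs2pos
        linarith
      linarith [hqt]
    · have p1' : A * s1 < s1 := by
        have := mul_lt_mul_of_pos_right hA1 (by linarith : (0:ℝ) < s1)
        linarith
      linarith [hqt]
  have hq'l : 1 + u₁ * (q.1 + t * u₂) + u₂ * (q.2 - t * u₁) = 0 := by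
    linear_combination hql
  have hmem : ((q.1 + t * u₂, q.2 - t * u₁) : ℝ × ℝ) ∈ hypEllipse a f := by
    simp only [hypEllipse, Set.mem_setOf_eq]
    rw [← hAdef, ← hBdef]
    exact ⟨hqt, hq'd⟩
  have heq := huniq (q.1 + t * u₂, q.2 - t * u₁) ⟨hmem, hq'l⟩
  have h1' := congrArg Prod.fst heq
  have h2' := congrArg Prod.snd heq
  simp at h1' h2'
  -- h1' : t = 0 ∨ u₂ = 0, h2' : t = 0 ∨ u₁ = 0
  have htzero : t = 0 := by
    rcases h1' with h | h
    · exact h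
    · rcases h2' with h2 | h2
      · exact h2
      · rcases hu0 with h3 | h3
        · exact absurd h2 h3
        · exact absurd h h3
  have hL0 : L = 0 := by
    rw [htdef] at htzero
    rcases div_eq_zero_iff.mp htzero with h3 | h3
    · linarith
    · exact absurd h3 (ne_of_gt hQ0)
  have hL0' : B * (q.1 * u₂) - A * (q.2 * u₁) = 0 := by
    have expand2 : B * (q.1 * u₂) - A * (q.2 * u₁)
        = (A * B / 2) * (2 * (q.1 * u₂ / A - q.2 * u₁ / B)) := by
      field_simp
    rw [← hLdef, hL0] at expand2
    linear_combination expand2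
  have hqe' : B * q.1 ^ 2 + A * q.2 ^ 2 - A * B = 0 := by
    have expand3 : B * q.1 ^ 2 + A * q.2 ^ 2 - A * B
        = (A * B) * ((q.1 ^ 2 / A + q.2 ^ 2 / B) - 1) := by
      field_simp
    rw [hqe] at expand3
    linear_combination expand3
  have hABpos : 0 < A * B := mul_pos hA0 hB0
  have hu1 : A * u₁ + q.1 = 0 := by
    have c1 : A * B * (A * u₁ + q.1) = 0 := by
      linear_combination (-(A * u₁)) * hqe' + (-(A * q.2)) * hL0' + (A * B * q.1) * hql
    rcases mul_eq_zero.mp c1 with h3 | h3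
    · exact absurd h3 (ne_of_gt hABpos)
    · exact h3
  have hu2 : B * u₂ + q.2 = 0 := by
    have c2 : A * B * (B * u₂ + q.2) = 0 := by
      linear_combination (-(B * u₂)) * hqe' + (B * q.1) * hL0' + (A * B * q.2) * hql
    rcases mul_eq_zero.mp c2 with h3 | h3
    · exact absurd h3 (ne_of_gt hABpos)
    · exact h3
  have hE : A * u₁ ^ 2 + B * u₂ ^ 2 = 1 := by
    have c3 : A * B * (A * u₁ ^ 2 + B * u₂ ^ 2 - 1) = 0 := by
      linear_combination (B * (A * u₁ - q.1)) * hu1 + (A * (B * u₂ - q.2)) * hu2 + hqe'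
    rcases mul_eq_zero.mp c3 with h3 | h3
    · exact absurd h3 (ne_of_gt hABpos)
    · linarith
  refine ⟨hE, ?_⟩
  have hdot : u₁ * q.1 + u₂ * q.2 = -1 := by linarith
  have hid : (u₁ * q.1 + u₂ * q.2) ^ 2 + (u₁ * q.2 - u₂ * q.1) ^ 2
      = (u₁ ^ 2 + u₂ ^ 2) * (q.1 ^ 2 + q.2 ^ 2) := by ring
  rw [hdot] at hid
  have h1 : 1 ≤ (u₁ ^ 2 + u₂ ^ 2) * (q.1 ^ 2 + q.2 ^ 2) := by
    linarith [hid, sq_nonneg (u₁ * q.2 - u₂ * q.1)]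
  have hT0 : 0 ≤ q.1 ^ 2 + q.2 ^ 2 := by positivity
  by_contra hle
  push_neg at hle
  have h2 : (u₁ ^ 2 + u₂ ^ 2) * (q.1 ^ 2 + q.2 ^ 2) ≤ 1 * (q.1 ^ 2 + q.2 ^ 2) :=
    mul_le_mul_of_nonneg_right hle hT0
  linarith

set_option maxHeartbeats 1600000 in
theorem stmt_19 (a f x y u₁ u₂ v₁ v₂ α : ℝ)
    (ha : 0 < a) (hf : 0 < f) (hf' : f < 1)
    (hell : Real.cosh (2 * a) > (1 + f ^ 2) / (1 - f ^ 2))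
    (hP : x ^ 2 + y ^ 2 < 1)
    (hext : x ^ 2 / Real.tanh a ^ 2 +
        y ^ 2 / (1 + 1 / ((f ^ 2 - 1) * Real.cosh a ^ 2)) > 1)
    (hPu : 1 + u₁ * x + u₂ * y = 0) (hPv : 1 + v₁ * x + v₂ * y = 0)
    (htu : IsTangent u₁ u₂ (hypEllipse a f)) (htv : IsTangent v₁ v₂ (hypEllipse a f))
    (huv : (u₁, u₂) ≠ (v₁, v₂))
    (hα : Real.cos α = -(lor (1, u₁, u₂) (1, v₁, v₂)) /
        Real.sqrt (lor (1, u₁, u₂) (1, u₁, u₂) * lor (1, v₁, v₂) (1, v₁, v₂))) :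
    Real.cos α ^ 2 =
      ((f ^ 2 - 1) * Real.cosh (2 * a) * (x ^ 2 + y ^ 2 - 1) + f ^ 2 * x ^ 2 - 1) ^ 2 /
      (-2 * (f ^ 2 - 1) * y ^ 2 * (f ^ 2 + x ^ 2) + (f ^ 2 - x ^ 2) ^ 2 +
        (f ^ 2 - 1) ^ 2 * y ^ 4) := by
  obtain ⟨hEu, hgu⟩ := tangent_char a f u₁ u₂ ha hf hf' hell htu
  obtain ⟨hEv, hgv⟩ := tangent_char a f v₁ v₂ ha hf hf' hell htv
  have hf2 : (0:ℝ) < 1 - f ^ 2 := by nlinarith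
  have hcpos : 0 < Real.cosh a ^ 2 := by positivity
  have hkey : 1 < (1 - f ^ 2) * Real.cosh a ^ 2 := by
    have h1 := (div_lt_iff₀ hf2).mp hell
    rw [Real.cosh_two_mul, Real.sinh_sq] at h1
    nlinarith
  have hc1 : 1 < Real.cosh a ^ 2 := by nlinarith [hkey, mul_pos hcpos (pow_pos hf 2)]
  set c := Real.cosh a ^ 2 with hcdef
  have htanh : Real.tanh a ^ 2 = (c - 1) / c := by
    rw [Real.tanh_eq_sinh_div_cosh, div_pow, Real.sinh_sq]
  have hcne : c ≠ 0 := ne_of_gt hcpos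
  have hkne0 : (f ^ 2 - 1) * c ≠ 0 := by nlinarith
  rw [htanh] at hEu hEv
  have hEu' : (c - 1) * (f ^ 2 - 1) * u₁ ^ 2 + ((f ^ 2 - 1) * c + 1) * u₂ ^ 2
      = (f ^ 2 - 1) * c := by
    have expand : (c - 1) * (f ^ 2 - 1) * u₁ ^ 2 + ((f ^ 2 - 1) * c + 1) * u₂ ^ 2
        - (f ^ 2 - 1) * c
        = ((f ^ 2 - 1) * c) * (((c - 1) / c * u₁ ^ 2
          + (1 + 1 / ((f ^ 2 - 1) * c)) * u₂ ^ 2) - 1) := by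
      have hf1 : f ^ 2 - 1 ≠ 0 := (by linarith : f ^ 2 - 1 < 0).ne
      field_simp
    rw [hEu] at expand
    linear_combination expand
  have hEv' : (c - 1) * (f ^ 2 - 1) * v₁ ^ 2 + ((f ^ 2 - 1) * c + 1) * v₂ ^ 2
      = (f ^ 2 - 1) * c := by
    have expand : (c - 1) * (f ^ 2 - 1) * v₁ ^ 2 + ((f ^ 2 - 1) * c + 1) * v₂ ^ 2
        - (f ^ 2 - 1) * c
        = ((f ^ 2 - 1) * c) * (((c - 1) / c * v₁ ^ 2
          + (1 + 1 / ((f ^ 2 - 1) * c)) * v₂ ^ 2) - 1) := by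
      have hf1 : f ^ 2 - 1 ≠ 0 := (by linarith : f ^ 2 - 1 < 0).ne
      field_simp
    rw [hEv] at expand
    linear_combination expand
  set k := (f ^ 2 - 1) * c with hkdef
  set A := (c - 1) * (f ^ 2 - 1) with hAdef
  set B := k + 1 with hBdef
  -- now hEu' : A * u₁ ^ 2 + B * u₂ ^ 2 = k, hEv' : A * v₁ ^ 2 + B * v₂ ^ 2 = k
  have hkneg : k < -1 := by rw [hkdef]; nlinarith
  have hAneg : A < 0 := by
    rw [hAdef]; nlinarith [mul_pos (sub_pos.mpr hc1) hf2]
  have hBneg : B < 0 := by rw [hBdef]; linarith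
  have hxy : x ≠ 0 ∨ y ≠ 0 := by
    by_contra h
    push_neg at h
    rw [h.1, h.2] at hPu
    norm_num at hPu
  have hWneg : A * y ^ 2 + B * x ^ 2 < 0 := by
    rcases hxy with h | h
    · have hx2 : 0 < x ^ 2 := lt_of_le_of_ne (sq_nonneg x) (Ne.symm (pow_ne_zero 2 h))
      have t1 : A * y ^ 2 ≤ 0 := mul_nonpos_iff.mpr (Or.inr ⟨hAneg.le, sq_nonneg y⟩)
      have t2 : B * x ^ 2 < 0 := mul_neg_of_neg_of_pos hBneg hx2
      linarith
    · have hy2 : 0 < y ^ 2 := lt_of_le_of_ne (sq_nonneg y) (Ne.symm (pow_ne_zero 2 h))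
      have t1 : B * x ^ 2 ≤ 0 := mul_nonpos_iff.mpr (Or.inr ⟨hBneg.le, sq_nonneg x⟩)
      have t2 : A * y ^ 2 < 0 := mul_neg_of_neg_of_pos hAneg hy2
      linarith
  have hWne : A * y ^ 2 + B * x ^ 2 ≠ 0 := ne_of_lt hWneg
  have hperp1 : x * (u₁ - v₁) + y * (u₂ - v₂) = 0 := by linear_combination hPu - hPv
  have hperp2 : (A * (u₁ + v₁)) * (u₁ - v₁) + (B * (u₂ + v₂)) * (u₂ - v₂) = 0 := by
    linear_combination hEu' - hEv'
  have hdne : u₁ - v₁ ≠ 0 ∨ u₂ - v₂ ≠ 0 := by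
    by_contra h
    push_neg at h
    apply huv
    have h1 : u₁ = v₁ := by linarith [h.1]
    have h2 : u₂ = v₂ := by linarith [h.2]
    rw [h1, h2]
  have hR : x * (B * (u₂ + v₂)) - y * (A * (u₁ + v₁)) = 0 :=
    cross_of_perp hdne hperp1 hperp2
  have h4 : (A * y ^ 2 + B * x ^ 2) * (u₁ + v₁) = -(2 * B * x) := by
    linear_combination (-y) * hR + (B * x) * hPu + (B * x) * hPv
  have h5 : (A * y ^ 2 + B * x ^ 2) * (u₂ + v₂) = -(2 * A * y) := by
    linear_combination x * hR + (A * y) * hPu + (A * y) * hPv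
  have Qu : (A * y ^ 2 + B * x ^ 2) * u₁ ^ 2 + 2 * B * x * u₁ + (B - k * y ^ 2) = 0 := by
    linear_combination y ^ 2 * hEu' + B * (1 + x * u₁ - y * u₂) * hPu
  have Qv : (A * y ^ 2 + B * x ^ 2) * v₁ ^ 2 + 2 * B * x * v₁ + (B - k * y ^ 2) = 0 := by
    linear_combination y ^ 2 * hEv' + B * (1 + x * v₁ - y * v₂) * hPv
  have Qu' : (A * y ^ 2 + B * x ^ 2) * u₂ ^ 2 + 2 * A * y * u₂ + (A - k * x ^ 2) = 0 := by
    linear_combination x ^ 2 * hEu' + A * (1 + y * u₂ - x * u₁) * hPu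
  have Qv' : (A * y ^ 2 + B * x ^ 2) * v₂ ^ 2 + 2 * A * y * v₂ + (A - k * x ^ 2) = 0 := by
    linear_combination x ^ 2 * hEv' + A * (1 + y * v₂ - x * v₁) * hPv
  obtain ⟨h1, h2, h3⟩ : (A * y ^ 2 + B * x ^ 2) * (u₁ * v₁) = B - k * y ^ 2
      ∧ (A * y ^ 2 + B * x ^ 2) * (u₂ * v₂) = A - k * x ^ 2
      ∧ (A * y ^ 2 + B * x ^ 2) * (u₁ * v₂ + u₂ * v₁) = 2 * k * x * y := by
    by_cases h12 : u₁ = v₁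
    · -- then y = 0
      have h22 : u₂ ≠ v₂ := by
        intro h
        exact huv (by rw [h12, h])
      have hy : y = 0 := by
        have h0 : y * (u₂ - v₂) = 0 := by
          rw [h12] at hperp1
          linear_combination hperp1
        rcases mul_eq_zero.mp h0 with h3 | h3
        · exact h3
        · exact absurd (by linarith : u₂ = v₂) h22
      subst hy
      have hx : x ≠ 0 := by
        rcases hxy with h | h
        · exact h
        · exact absurd rfl h
      have hx2 : 0 < x ^ 2 := lt_of_le_of_ne (sq_nonneg x) (Ne.symm (pow_ne_zero 2 hx))
      have hbx : B * x ^ 2 ≠ 0 := ne_of_lt (mul_neg_of_neg_of_pos hBneg hx2)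
      have hv2 : u₂ + v₂ = 0 := by
        have h5' : B * x ^ 2 * (u₂ + v₂) = 0 := by linear_combination h5
        rcases mul_eq_zero.mp h5' with h3 | h3
        · exact absurd h3 hbx
        · exact h3
      refine ⟨?_, ?_, ?_⟩
      · linear_combination (-(B * x ^ 2 * u₁)) * h12 + (B * (x * u₁ - 1)) * hPu
      · linear_combination (B * x ^ 2 * u₂) * hv2 + (-(x ^ 2)) * hEu'
          + (A * (x * u₁ - 1)) * hPu
      · linear_combination (B * x ^ 2 * u₁) * hv2 + (-(B * x ^ 2 * u₂)) * h12
    · by_cases h22 : u₂ = v₂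
      · -- then x = 0
        have hne1 : u₁ - v₁ ≠ 0 := sub_ne_zero.mpr h12
        have hx : x = 0 := by
          have h0 : x * (u₁ - v₁) = 0 := by
            rw [h22] at hperp1
            linear_combination hperp1
          rcases mul_eq_zero.mp h0 with h3 | h3
          · exact h3
          · exact absurd h3 hne1
        subst hx
        have hy : y ≠ 0 := by
          rcases hxy with h | h
          · exact absurd rfl h
          · exact h
        have hy2 : 0 < y ^ 2 := lt_of_le_of_ne (sq_nonneg y) (Ne.symm (pow_ne_zero 2 hy))
        have hay : A * y ^ 2 ≠ 0 := ne_of_lt (mul_neg_of_neg_of_pos hAneg hy2)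
        have hv1 : u₁ + v₁ = 0 := by
          have h4' : A * y ^ 2 * (u₁ + v₁) = 0 := by linear_combination h4
          rcases mul_eq_zero.mp h4' with h3 | h3
          · exact absurd h3 hay
          · exact h3
        refine ⟨?_, ?_, ?_⟩
        · linear_combination (A * y ^ 2 * u₁) * hv1 + (-(y ^ 2)) * hEu'
            + (B * (y * u₂ - 1)) * hPu
        · linear_combination (-(A * y ^ 2 * u₂)) * h22 + (A * (y * u₂ - 1)) * hPu
        · linear_combination (A * y ^ 2 * v₂) * hv1 + (A * y ^ 2 * v₁) * h22
      · -- generic case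
        have hne1 : u₁ - v₁ ≠ 0 := sub_ne_zero.mpr h12
        have hne2 : u₂ - v₂ ≠ 0 := sub_ne_zero.mpr h22
        have h1 : (A * y ^ 2 + B * x ^ 2) * (u₁ * v₁) = B - k * y ^ 2 := by
          have hfac : (u₁ - v₁) * ((A * y ^ 2 + B * x ^ 2) * (u₁ * v₁)
              - (B - k * y ^ 2)) = 0 := by
            linear_combination v₁ * Qu - u₁ * Qv
          rcases mul_eq_zero.mp hfac with h3 | h3
          · exact absurd h3 hne1
          · linarith
        have h2 : (A * y ^ 2 + B * x ^ 2) * (u₂ * v₂) = A - k * x ^ 2 := by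
          have hfac : (u₂ - v₂) * ((A * y ^ 2 + B * x ^ 2) * (u₂ * v₂)
              - (A - k * x ^ 2)) = 0 := by
            linear_combination v₂ * Qu' - u₂ * Qv'
          rcases mul_eq_zero.mp hfac with h3 | h3
          · exact absurd h3 hne2
          · linarith
        refine ⟨h1, h2, ?_⟩
        rcases hxy with hx | hy
        · have hfac : x * ((A * y ^ 2 + B * x ^ 2) * (u₁ * v₂ + u₂ * v₁)
              - 2 * k * x * y) = 0 := by
            linear_combination (-(1:ℝ)) * h5 + (-2 * y) * h2
              + ((A * y ^ 2 + B * x ^ 2) * v₂) * hPu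
              + ((A * y ^ 2 + B * x ^ 2) * u₂) * hPv
          rcases mul_eq_zero.mp hfac with h3 | h3
          · exact absurd h3 hx
          · linarith
        · have hfac : y * ((A * y ^ 2 + B * x ^ 2) * (u₁ * v₂ + u₂ * v₁)
              - 2 * k * x * y) = 0 := by
            linear_combination (-(1:ℝ)) * h4 + (-2 * x) * h1
              + ((A * y ^ 2 + B * x ^ 2) * v₁) * hPu
              + ((A * y ^ 2 + B * x ^ 2) * u₁) * hPv
          rcases mul_eq_zero.mp hfac with h3 | h3
          · exact absurd h3 hy
          · linarith
  -- unfold the abbreviations in the key identities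
  rw [hBdef, hAdef, hkdef] at h1 h2 h3 h4 h5 hWne
  -- division forms
  have eq1 : u₁ * v₁ = ((f ^ 2 - 1) * c + 1 - (f ^ 2 - 1) * c * y ^ 2)
      / ((c - 1) * (f ^ 2 - 1) * y ^ 2 + ((f ^ 2 - 1) * c + 1) * x ^ 2) := by
    rw [eq_div_iff hWne]; linear_combination h1
  have eq2 : u₂ * v₂ = ((c - 1) * (f ^ 2 - 1) - (f ^ 2 - 1) * c * x ^ 2)
      / ((c - 1) * (f ^ 2 - 1) * y ^ 2 + ((f ^ 2 - 1) * c + 1) * x ^ 2) := by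
    rw [eq_div_iff hWne]; linear_combination h2
  have eq3 : u₁ * v₂ + u₂ * v₁ = (2 * (f ^ 2 - 1) * c * x * y)
      / ((c - 1) * (f ^ 2 - 1) * y ^ 2 + ((f ^ 2 - 1) * c + 1) * x ^ 2) := by
    rw [eq_div_iff hWne]; linear_combination h3
  have eq4 : u₁ + v₁ = (-(2 * ((f ^ 2 - 1) * c + 1) * x))
      / ((c - 1) * (f ^ 2 - 1) * y ^ 2 + ((f ^ 2 - 1) * c + 1) * x ^ 2) := by
    rw [eq_div_iff hWne]; linear_combination h4
  have eq5 : u₂ + v₂ = (-(2 * ((c - 1) * (f ^ 2 - 1)) * y))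
      / ((c - 1) * (f ^ 2 - 1) * y ^ 2 + ((f ^ 2 - 1) * c + 1) * x ^ 2) := by
    rw [eq_div_iff hWne]; linear_combination h5
  have eqNu : 1 - u₁ * v₁ - u₂ * v₂
      = ((f ^ 2 - 1) * (2 * c - 1) * (x ^ 2 + y ^ 2 - 1) + f ^ 2 * x ^ 2 - 1)
      / ((c - 1) * (f ^ 2 - 1) * y ^ 2 + ((f ^ 2 - 1) * c + 1) * x ^ 2) := by
    rw [eq_div_iff hWne]
    linear_combination (-(1:ℝ)) * h1 + (-(1:ℝ)) * h2
  have eqProdW : (u₁ ^ 2 + u₂ ^ 2 - 1) * (v₁ ^ 2 + v₂ ^ 2 - 1) * ((c - 1) * (f ^ 2 - 1) * y ^ 2 + ((f ^ 2 - 1) * c + 1) * x ^ 2) ^ 2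
      = -2 * (f ^ 2 - 1) * y ^ 2 * (f ^ 2 + x ^ 2) + (f ^ 2 - x ^ 2) ^ 2 +
        (f ^ 2 - 1) ^ 2 * y ^ 4 := by
    linear_combination
      (((c - 1) * (f ^ 2 - 1) * y ^ 2 + ((f ^ 2 - 1) * c + 1) * x ^ 2) * (u₁ * v₁) + ((f ^ 2 - 1) * c + 1 - (f ^ 2 - 1) * c * y ^ 2)
        - 2 * (((c - 1) * (f ^ 2 - 1) * y ^ 2 + ((f ^ 2 - 1) * c + 1) * x ^ 2) * (u₂ * v₂)) + 2 * ((c - 1) * (f ^ 2 - 1) * y ^ 2 + ((f ^ 2 - 1) * c + 1) * x ^ 2)) * h1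
      + (((c - 1) * (f ^ 2 - 1) * y ^ 2 + ((f ^ 2 - 1) * c + 1) * x ^ 2) * (u₂ * v₂) + ((c - 1) * (f ^ 2 - 1) - (f ^ 2 - 1) * c * x ^ 2)
        - 2 * ((f ^ 2 - 1) * c + 1 - (f ^ 2 - 1) * c * y ^ 2) + 2 * ((c - 1) * (f ^ 2 - 1) * y ^ 2 + ((f ^ 2 - 1) * c + 1) * x ^ 2)) * h2
      + (((c - 1) * (f ^ 2 - 1) * y ^ 2 + ((f ^ 2 - 1) * c + 1) * x ^ 2) * (u₁ * v₂ + u₂ * v₁) + 2 * (f ^ 2 - 1) * c * x * y) * h3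
      + (-(((c - 1) * (f ^ 2 - 1) * y ^ 2 + ((f ^ 2 - 1) * c + 1) * x ^ 2) * (u₁ + v₁) + -(2 * ((f ^ 2 - 1) * c + 1) * x))) * h4
      + (-(((c - 1) * (f ^ 2 - 1) * y ^ 2 + ((f ^ 2 - 1) * c + 1) * x ^ 2) * (u₂ + v₂) + -(2 * ((c - 1) * (f ^ 2 - 1)) * y))) * h5
  have eqProd : (u₁ ^ 2 + u₂ ^ 2 - 1) * (v₁ ^ 2 + v₂ ^ 2 - 1)
      = (-2 * (f ^ 2 - 1) * y ^ 2 * (f ^ 2 + x ^ 2) + (f ^ 2 - x ^ 2) ^ 2 +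
        (f ^ 2 - 1) ^ 2 * y ^ 4)
      / ((c - 1) * (f ^ 2 - 1) * y ^ 2 + ((f ^ 2 - 1) * c + 1) * x ^ 2) ^ 2 := by
    rw [eq_div_iff (pow_ne_zero 2 hWne)]
    exact eqProdW
  -- positivity of the product and of D
  have hprodpos : 0 < (u₁ ^ 2 + u₂ ^ 2 - 1) * (v₁ ^ 2 + v₂ ^ 2 - 1) :=
    mul_pos (by linarith) (by linarith)
  have hW2pos : 0 < ((c - 1) * (f ^ 2 - 1) * y ^ 2 + ((f ^ 2 - 1) * c + 1) * x ^ 2) ^ 2 :=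
    lt_of_le_of_ne (sq_nonneg _) (Ne.symm (pow_ne_zero 2 hWne))
  have hDval : (-2 * (f ^ 2 - 1) * y ^ 2 * (f ^ 2 + x ^ 2) + (f ^ 2 - x ^ 2) ^ 2 +
        (f ^ 2 - 1) ^ 2 * y ^ 4)
      = ((u₁ ^ 2 + u₂ ^ 2 - 1) * (v₁ ^ 2 + v₂ ^ 2 - 1))
        * ((c - 1) * (f ^ 2 - 1) * y ^ 2 + ((f ^ 2 - 1) * c + 1) * x ^ 2) ^ 2 :=
    eq_mul_of_div_sq _ _ _ hWne eqProd
  have hDpos : 0 < -2 * (f ^ 2 - 1) * y ^ 2 * (f ^ 2 + x ^ 2) + (f ^ 2 - x ^ 2) ^ 2 +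
      (f ^ 2 - 1) ^ 2 * y ^ 4 := by
    rw [hDval]
    exact mul_pos hprodpos hW2pos
  -- rewrite the lor expressions
  have hlu : lor (1, u₁, u₂) (1, u₁, u₂) = u₁ ^ 2 + u₂ ^ 2 - 1 := by
    simp only [lor]; ring
  have hlv : lor (1, v₁, v₂) (1, v₁, v₂) = v₁ ^ 2 + v₂ ^ 2 - 1 := by
    simp only [lor]; ring
  have hluv : -(lor (1, u₁, u₂) (1, v₁, v₂)) = 1 - u₁ * v₁ - u₂ * v₂ := by
    simp only [lor]; ring
  rw [hlu, hlv, hluv] at hα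
  have hcosh2 : Real.cosh (2 * a) = 2 * c - 1 := by
    rw [Real.cosh_two_mul, Real.sinh_sq, ← hcdef]
    ring
  have hDne : (-2 * (f ^ 2 - 1) * y ^ 2 * (f ^ 2 + x ^ 2) + (f ^ 2 - x ^ 2) ^ 2 +
      (f ^ 2 - 1) ^ 2 * y ^ 4) ≠ 0 := ne_of_gt hDpos
  rw [hα, hcosh2, div_pow, Real.sq_sqrt hprodpos.le, eqNu, eqProd]
  exact div_sq_div_aux _ _ _ hWne hDne
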